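/- arXiv:2207.08926 — 2 statements merged into one kernel-verified Lean document; each statement's English description precedes it below -/
import Mathlib

section
/- With the notation of the context, an object X of 𝒟 lies in the tilted heart 𝒟_υ^♥ := 𝒟_υ^{≤0} ∩ 𝒟_υ^{≥0} if and only if there exists a distinguished triangle F[1] → X → T → F[2] in 𝒟 with F ∈ ℱ and T ∈ 𝒯. -/
open CategoryTheory CategoryTheory.Limits CategoryTheory.Pretriangulated

universe v u

variable (C : Type u) [Category.{v} C] [HasZeroObject C] [Preadditive C] [HasShift C ℤ]
  [∀ n : ℤ, (shiftFunctor C n).Additive] [Pretriangulated C]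

/-- A t-structure on a pretriangulated category `C`, given by the two isomorphism-closed
classes `le` (the objects of `𝒟^{≤0}`) and `ge` (the objects of `𝒟^{≥0}`).  With the
convention that `X ∈ 𝒟^{≤n} ↔ le (X⟦n⟧)` and `X ∈ 𝒟^{≥n} ↔ ge (X⟦n⟧)`, the axioms read:
`𝒟^{≤-1} ⊆ 𝒟^{≤0}` (equivalently `𝒟^{≤0}[1] ⊆ 𝒟^{≤0}`), `𝒟^{≥1} ⊆ 𝒟^{≥0}` (equivalently
`𝒟^{≥0}[-1] ⊆ 𝒟^{≥0}`), `Hom(X, Y) = 0` for `X ∈ 𝒟^{≤0}` and `Y ∈ 𝒟^{≥1}`, and every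
object sits in a distinguished triangle `A → X → B → A[1]` with `A ∈ 𝒟^{≤0}`,
`B ∈ 𝒟^{≥1}`. -/
structure TStruct where
  /-- the class `𝒟^{≤0}` -/
  le : C → Prop
  /-- the class `𝒟^{≥0}` -/
  ge : C → Prop
  le_iso_closed : ∀ {X Y : C}, (X ≅ Y) → le X → le Y
  ge_iso_closed : ∀ {X Y : C}, (X ≅ Y) → ge X → ge Y
  le_shift : ∀ X : C, le X → le (X⟦(1 : ℤ)⟧)
  ge_shift : ∀ X : C, ge X → ge (X⟦(-1 : ℤ)⟧)
  hom_vanish : ∀ {X Y : C}, le X → ge (Y⟦(1 : ℤ)⟧) → ∀ f : X ⟶ Y, f = 0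
  exists_triangle : ∀ X : C, ∃ (A B : C) (f : A ⟶ X) (g : X ⟶ B) (h : B ⟶ A⟦(1 : ℤ)⟧),
    (Triangle.mk f g h ∈ distTriang C) ∧ le A ∧ ge (B⟦(1 : ℤ)⟧)

variable {C}

/-- The heart `𝒟^♥ = 𝒟^{≤0} ∩ 𝒟^{≥0}` of a t-structure. -/
def TStruct.heart (t : TStruct C) (X : C) : Prop := t.le X ∧ t.ge X

/-- A torsion pair `(𝒯, ℱ)` on the heart of a t-structure: two isomorphism-closed classes
of objects of the heart such that `Hom(T, F) = 0` for `T ∈ 𝒯`, `F ∈ ℱ`, and every object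
of the heart sits in a distinguished triangle `T → X → F → T[1]` with `T ∈ 𝒯`, `F ∈ ℱ`
(i.e. a short exact sequence `0 → T → X → F → 0` in the heart). -/
structure HeartTorsionPair (t : TStruct C) where
  /-- the torsion class -/
  torsion : C → Prop
  /-- the torsion-free class -/
  free : C → Prop
  torsion_mem_heart : ∀ X : C, torsion X → t.heart X
  free_mem_heart : ∀ X : C, free X → t.heart X
  torsion_iso_closed : ∀ {X Y : C}, (X ≅ Y) → torsion X → torsion Y
  free_iso_closed : ∀ {X Y : C}, (X ≅ Y) → free X → free Y
  hom_vanish : ∀ {T F : C}, torsion T → free F → ∀ f : T ⟶ F, f = 0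
  exists_triangle : ∀ X : C, t.heart X →
    ∃ (T F : C) (f : T ⟶ X) (g : X ⟶ F) (h : F ⟶ T⟦(1 : ℤ)⟧),
      (Triangle.mk f g h ∈ distTriang C) ∧ torsion T ∧ free F

/-- The connective part `𝒟_υ^{≤0}` of the tilting of a t-structure `t` with respect to a
torsion class `torsion` on its heart: those `X ∈ 𝒟^{≤0}` fitting in a distinguished
triangle `A → X → T → A[1]` with `A ∈ 𝒟^{≤-1}` and `T` torsion. -/
def TiltLE (t : TStruct C) (torsion : C → Prop) (X : C) : Prop :=
  t.le X ∧ ∃ (A T : C) (f : A ⟶ X) (g : X ⟶ T) (h : T ⟶ A⟦(1 : ℤ)⟧),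
    (Triangle.mk f g h ∈ distTriang C) ∧ t.le (A⟦(-1 : ℤ)⟧) ∧ torsion T

/-- The coconnective part `𝒟_υ^{≥0}` of the tilting of a t-structure `t` with respect to a
torsion-free class `free` on its heart: those `X ∈ 𝒟^{≥-1}` fitting in a distinguished
triangle `F[1] → X → B → F[2]` with `F` torsion-free and `B ∈ 𝒟^{≥0}`. -/
def TiltGE (t : TStruct C) (free : C → Prop) (X : C) : Prop :=
  t.ge (X⟦(-1 : ℤ)⟧) ∧ ∃ (F B : C) (f : F⟦(1 : ℤ)⟧ ⟶ X) (g : X ⟶ B)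
    (h : B ⟶ (F⟦(1 : ℤ)⟧)⟦(1 : ℤ)⟧),
    (Triangle.mk f g h ∈ distTriang C) ∧ free F ∧ t.ge B


namespace TStruct

lemma homZero (t : TStruct C) {X Y : C} (hX : t.le (X⟦(-1 : ℤ)⟧)) (hY : t.ge Y)
    (f : X ⟶ Y) : f = 0 := by
  apply (shiftFunctor C (-1 : ℤ)).map_injective
  rw [Functor.map_zero]
  exact t.hom_vanish hX
    (t.ge_iso_closed ((shiftFunctorCompIsoId C (-1 : ℤ) (1 : ℤ) (by ring)).app Y).symm hY) _

lemma le_ext (t : TStruct C) (T : Triangle C) (hT : T ∈ distTriang C)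
    (h1 : t.le T.obj₁) (h3 : t.le T.obj₃) : t.le T.obj₂ := by
  obtain ⟨A, B, f, g, h, hdt, hA, hB⟩ := t.exists_triangle T.obj₂
  have hg0 : g = 0 := by
    obtain ⟨ψ, hψ⟩ := Triangle.yoneda_exact₂ T hT g (t.hom_vanish h1 hB _)
    rw [hψ, t.hom_vanish h3 hB ψ, comp_zero]
  have hBz : IsZero B := by
    rw [IsZero.iff_id_eq_zero]
    obtain ⟨φ, hφ⟩ := Triangle.yoneda_exact₃ _ hdt (𝟙 B) (by erw [Category.comp_id]; exact hg0)
    rw [t.hom_vanish (t.le_shift A hA) hB φ] at hφ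
    exact hφ.trans comp_zero
  have : IsIso f := ((Triangle.mk f g h).isZero₃_iff_isIso₁ hdt).1 hBz
  exact t.le_iso_closed (asIso f) hA

lemma ge_ext (t : TStruct C) (T : Triangle C) (hT : T ∈ distTriang C)
    (h1 : t.ge T.obj₁) (h3 : t.ge T.obj₃) : t.ge T.obj₂ := by
  obtain ⟨A, B, f, g, h, hdt, hA, hB⟩ := t.exists_triangle (T.obj₂⟦(-1 : ℤ)⟧)
  have hdt' : (Triangle.shiftFunctor C (1 : ℤ)).obj (Triangle.mk f g h) ∈ distTriang C := by
    rw [← Triangle.shiftFunctor_eq]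
    exact Triangle.shift_distinguished _ hdt 1
  set T' := (Triangle.shiftFunctor C (1 : ℤ)).obj (Triangle.mk f g h) with hT'def
  let e : (T.obj₂⟦(-1 : ℤ)⟧)⟦(1 : ℤ)⟧ ≅ T.obj₂ :=
    (shiftFunctorCompIsoId C (-1 : ℤ) (1 : ℤ) (by ring)).app T.obj₂
  have hAle : t.le ((A⟦(1 : ℤ)⟧)⟦(-1 : ℤ)⟧) :=
    t.le_iso_closed ((shiftFunctorCompIsoId C (1 : ℤ) (-1 : ℤ) (by ring)).app A).symm hA
  have hm0 : T'.mor₁ = 0 := by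
    obtain ⟨φ, hφ⟩ := Triangle.coyoneda_exact₂ T hT (T'.mor₁ ≫ e.hom) (t.homZero hAle h3 _)
    rw [t.homZero hAle h1 φ] at hφ
    exact (cancel_mono e.hom).1 (hφ.trans (zero_comp.trans zero_comp.symm))
  have hzero : IsZero T'.obj₁ := by
    rw [IsZero.iff_id_eq_zero]
    obtain ⟨φ, hφ⟩ := Triangle.coyoneda_exact₂ _ (inv_rot_of_distTriang _ hdt') (𝟙 T'.obj₁)
      (by erw [Category.id_comp]; exact hm0)
    rw [t.homZero hAle (t.ge_shift _ hB) φ] at hφ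
    exact hφ.trans zero_comp
  have : IsIso T'.mor₂ := (T'.isZero₁_iff_isIso₂ hdt').1 hzero
  exact t.ge_iso_closed (e.symm ≪≫ @asIso _ _ _ _ T'.mor₂ this).symm hB

end TStruct

/-- An object `X` lies in the tilted heart `𝒟_υ^♥ = 𝒟_υ^{≤0} ∩ 𝒟_υ^{≥0}` if and only if it
fits into a distinguished triangle `F[1] → X → T → F[2]` with `F ∈ ℱ` and `T ∈ 𝒯`. -/
theorem mem_tilted_heart_iff (t : TStruct C) (tp : HeartTorsionPair t) (X : C) :
    (TiltLE t tp.torsion X ∧ TiltGE t tp.free X) ↔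
      ∃ (F T : C) (f : F⟦(1 : ℤ)⟧ ⟶ X) (g : X ⟶ T) (h : T ⟶ (F⟦(1 : ℤ)⟧)⟦(1 : ℤ)⟧),
        (Triangle.mk f g h ∈ distTriang C) ∧ tp.free F ∧ tp.torsion T := by
  constructor
  · rintro ⟨⟨leX, A, T, fA, gT, hT3, dt₁, hA, hTtor⟩,
      geX, F, B, fF, gB, hB, dt₂, hFfree, hgeB⟩
    have hFh := tp.free_mem_heart F hFfree
    have leB : t.le B :=
      t.le_ext _ (rot_of_distTriang _ dt₂) leX (t.le_shift _ (t.le_shift F hFh.1))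
    obtain ⟨T', F', f', g', h', dt₃, hT', hF'⟩ := tp.exists_triangle B ⟨leB, hgeB⟩
    have hF'h := tp.free_mem_heart F' hF'
    have hT'h := tp.torsion_mem_heart T' hT'
    have hXF' : gB ≫ g' = 0 := by
      obtain ⟨ψ, hψ⟩ := Triangle.yoneda_exact₂ _ dt₁ (gB ≫ g') (t.homZero hA hF'h.2 _)
      rw [tp.hom_vanish hTtor hF' ψ] at hψ
      exact hψ.trans comp_zero
    have hg'0 : g' = 0 := by
      obtain ⟨ψ, hψ⟩ := Triangle.yoneda_exact₃ _ dt₂ g' hXF'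
      rw [t.homZero (t.le_iso_closed
        ((shiftFunctorCompIsoId C (1 : ℤ) (-1 : ℤ) (by ring)).app (F⟦(1 : ℤ)⟧)).symm
        (t.le_shift F hFh.1)) hF'h.2 ψ] at hψ
      exact hψ.trans comp_zero
    have hF'z : IsZero F' := by
      rw [IsZero.iff_id_eq_zero]
      obtain ⟨ψ, hψ⟩ := Triangle.yoneda_exact₃ _ dt₃ (𝟙 F')
        (by erw [Category.comp_id]; exact hg'0)
      rw [t.homZero (t.le_iso_closed
        ((shiftFunctorCompIsoId C (1 : ℤ) (-1 : ℤ) (by ring)).app T').symm hT'h.1)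
        hF'h.2 ψ] at hψ
      exact hψ.trans comp_zero
    have : IsIso f' := ((Triangle.mk f' g' h').isZero₃_iff_isIso₁ dt₃).1 hF'z
    exact ⟨F, B, fF, gB, hB, dt₂, hFfree, tp.torsion_iso_closed (asIso f') hT'⟩
  · rintro ⟨F, T, f, g, h, hdt, hF, hT⟩
    have hFh := tp.free_mem_heart F hF
    have hTh := tp.torsion_mem_heart T hT
    have leX : t.le X :=
      t.le_ext _ hdt (t.le_shift F hFh.1) hTh.1
    have hdt' : (Triangle.shiftFunctor C (-1 : ℤ)).obj (Triangle.mk f g h) ∈ distTriang C := by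
      rw [← Triangle.shiftFunctor_eq]
      exact Triangle.shift_distinguished _ hdt (-1)
    have geX : t.ge (X⟦(-1 : ℤ)⟧) := t.ge_ext _ hdt'
      (t.ge_iso_closed ((shiftFunctorCompIsoId C (1 : ℤ) (-1 : ℤ) (by ring)).app F).symm hFh.2)
      (t.ge_shift T hTh.2)
    exact ⟨⟨leX, F⟦(1 : ℤ)⟧, T, f, g, h, hdt,
      t.le_iso_closed ((shiftFunctorCompIsoId C (1 : ℤ) (-1 : ℤ) (by ring)).app F).symm hFh.1,
      hT⟩, geX, F, T, f, g, h, hdt, hF, hTh.2⟩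
end

section
/- With the notation of the context, assume that 𝒯 is a Serre subcategory of the heart 𝒟^♥, i.e. for every distinguished triangle X → Y → Z → X[1] with X, Y, Z ∈ 𝒟^♥, one has Y ∈ 𝒯 if and only if both X ∈ 𝒯 and Z ∈ 𝒯. Then 𝒯 is contained in the tilted heart 𝒟_υ^♥ := 𝒟_υ^{≤0} ∩ 𝒟_υ^{≥0}, and 𝒯 is a Serre subcategory of the tilted heart: for every distinguished triangle X → Y → Z → X[1] with X, Y, Z ∈ 𝒟_υ^♥, one has Y ∈ 𝒯 if and only if both X ∈ 𝒯 and Z ∈ 𝒯. -/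
open CategoryTheory CategoryTheory.Limits CategoryTheory.Pretriangulated

universe v u

variable (C : Type u) [Category.{v} C] [HasZeroObject C] [Preadditive C] [HasShift C ℤ]
  [∀ n : ℤ, (shiftFunctor C n).Additive] [Pretriangulated C]

variable {C}

section Helpers

open Limits ZeroObject Category

/-- The canonical isomorphism `X⟦1⟧⟦-1⟧ ≅ X`. -/
noncomputable def shiftPN (X : C) : X⟦(1 : ℤ)⟧⟦(-1 : ℤ)⟧ ≅ X :=
  (shiftFunctorCompIsoId C (1 : ℤ) (-1 : ℤ) (by omega)).app X

/-- The canonical isomorphism `X⟦-1⟧⟦1⟧ ≅ X`. -/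
noncomputable def shiftNP (X : C) : X⟦(-1 : ℤ)⟧⟦(1 : ℤ)⟧ ≅ X :=
  (shiftFunctorCompIsoId C (-1 : ℤ) (1 : ℤ) (by omega)).app X

lemma split_lemma (T : Triangle C) (hT : T ∈ distTriang C) (h0 : T.mor₁ = 0)
    (hvan : ∀ s : T.obj₁⟦(1 : ℤ)⟧ ⟶ T.obj₃, s = 0) : IsZero T.obj₁ ∧ IsIso T.mor₂ := by
  obtain ⟨s, hs⟩ := Triangle.coyoneda_exact₃ _ (rot_of_distTriang _ hT)
    (𝟙 (T.obj₁⟦(1 : ℤ)⟧)) (by simp [h0]; exact comp_zero)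
  have hid : 𝟙 (T.obj₁⟦(1 : ℤ)⟧) = 0 := by rw [hs, show s = 0 from hvan s, zero_comp]; rfl
  have hz1 : IsZero (T.obj₁⟦(1 : ℤ)⟧) := (IsZero.iff_id_eq_zero _).2 hid
  have hz : IsZero T.obj₁ :=
    (Functor.map_isZero (shiftFunctor C (-1 : ℤ)) hz1).of_iso (shiftPN T.obj₁).symm
  exact ⟨hz, (Triangle.isZero₁_iff_isIso₂ _ hT).1 hz⟩

namespace TStruct

variable (t : TStruct C)

lemma heart_iso_closed {X Y : C} (e : X ≅ Y) (h : t.heart X) : t.heart Y :=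
  ⟨t.le_iso_closed e h.1, t.ge_iso_closed e h.2⟩

lemma le_up {X : C} (h : t.le (X⟦(-1 : ℤ)⟧)) : t.le X :=
  t.le_iso_closed (shiftNP X) (t.le_shift _ h)

lemma vanish₁ {X Y : C} (hX : t.le (X⟦(-1 : ℤ)⟧)) (hY : t.ge Y) (f : X ⟶ Y) : f = 0 := by
  have h0 : (shiftFunctor C (-1 : ℤ)).map f = 0 :=
    t.hom_vanish hX (t.ge_iso_closed (shiftNP Y).symm hY) _
  apply (shiftFunctor C (-1 : ℤ)).map_injective
  rw [h0, Functor.map_zero]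

lemma vanish₂ {X Y : C} (hX : t.le ((X⟦(-1 : ℤ)⟧)⟦(-1 : ℤ)⟧)) (hY : t.ge (Y⟦(-1 : ℤ)⟧))
    (f : X ⟶ Y) : f = 0 := by
  have h0 : (shiftFunctor C (-1 : ℤ)).map f = 0 := t.vanish₁ hX hY _
  apply (shiftFunctor C (-1 : ℤ)).map_injective
  rw [h0, Functor.map_zero]

lemma zero_mem {X : C} (hX : IsZero X) : t.heart X := by
  obtain ⟨A, B, f, g, h, hT, hA, hB⟩ := t.exists_triangle X
  have hIso : IsIso h := (Triangle.isZero₁_iff_isIso₂ _ (rot_of_distTriang _ hT)).1 hX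
  have hleB : t.le B := t.le_iso_closed (asIso h).symm (t.le_shift A hA)
  have hBz : IsZero B := (IsZero.iff_id_eq_zero _).2 (t.hom_vanish hleB hB (𝟙 B))
  exact ⟨t.le_iso_closed (hBz.iso hX) hleB,
    t.ge_iso_closed ((Functor.map_isZero (shiftFunctor C (1 : ℤ)) hBz).iso hX) hB⟩

lemma le_of_hom (X : C) (hvan : ∀ B : C, t.ge (B⟦(1 : ℤ)⟧) → ∀ f : X ⟶ B, f = 0) :
    t.le X := by
  obtain ⟨A, B, f, g, h, hT, hA, hB⟩ := t.exists_triangle X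
  have hg : g = 0 := hvan B hB g
  obtain ⟨ψ, hψ⟩ := Triangle.yoneda_exact₂ _ (rot_of_distTriang _ hT) (𝟙 B)
    (by simp [hg]; exact zero_comp)
  have hψ0 : ψ = 0 := t.hom_vanish (t.le_shift A hA) hB ψ
  have hBz : IsZero B := (IsZero.iff_id_eq_zero _).2 (by rw [hψ, hψ0, comp_zero]; rfl)
  have hIso : IsIso f := (Triangle.isZero₃_iff_isIso₁ _ hT).1 hBz
  exact t.le_iso_closed (asIso f) hA

lemma ge_of_hom (X : C) (hvan : ∀ W : C, t.le (W⟦(-1 : ℤ)⟧) → ∀ f : W ⟶ X, f = 0) :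
    t.ge X := by
  obtain ⟨A, B, f, g, h, hT, hA, hB⟩ := t.exists_triangle (X⟦(-1 : ℤ)⟧)
  have hT3 : Triangle.mk (-f⟦(1 : ℤ)⟧') (-g⟦(1 : ℤ)⟧') (-(h⟦(1 : ℤ)⟧')) ∈ distTriang C :=
    rot_of_distTriang _ (rot_of_distTriang _ (rot_of_distTriang _ hT))
  have hle1 : t.le ((A⟦(1 : ℤ)⟧)⟦(-1 : ℤ)⟧) := t.le_iso_closed (shiftPN A).symm hA
  have hm : (-f⟦(1 : ℤ)⟧') ≫ (shiftNP X).hom = 0 := hvan _ hle1 _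
  have hmor : (-f⟦(1 : ℤ)⟧') = 0 := by
    rw [← comp_id (-f⟦(1 : ℤ)⟧'), ← (shiftNP X).hom_inv_id, ← assoc, hm, zero_comp]
  obtain ⟨hz, hiso⟩ := split_lemma _ hT3 hmor
    (fun s => t.vanish₁ (t.le_iso_closed (shiftPN (A⟦(1 : ℤ)⟧)).symm (t.le_shift A hA)) hB s)
  haveI : IsIso (-g⟦(1 : ℤ)⟧') := hiso
  exact t.ge_iso_closed ((asIso (-g⟦(1 : ℤ)⟧')).symm ≪≫ shiftNP X) hB

lemma le₂ (T : Triangle C) (hT : T ∈ distTriang C) (h₁ : t.le T.obj₁) (h₃ : t.le T.obj₃) :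
    t.le T.obj₂ :=
  t.le_of_hom _ (fun B hB f => by
    obtain ⟨g', hg'⟩ := Triangle.yoneda_exact₂ _ hT f (t.hom_vanish h₁ hB _)
    rw [hg', t.hom_vanish h₃ hB g', comp_zero])

lemma ge₂ (T : Triangle C) (hT : T ∈ distTriang C) (h₁ : t.ge T.obj₁) (h₃ : t.ge T.obj₃) :
    t.ge T.obj₂ :=
  t.ge_of_hom _ (fun W hW f => by
    obtain ⟨g', hg'⟩ := Triangle.coyoneda_exact₂ _ hT f (t.vanish₁ hW h₃ _)
    rw [hg', t.vanish₁ hW h₁ g', zero_comp])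

end TStruct

namespace HeartTorsionPair

variable {t : TStruct C} (tp : HeartTorsionPair t)

lemma free_of_isZero {X : C} (hX : IsZero X) : tp.free X := by
  obtain ⟨T, F, f, g, h, hT, hTt, hFf⟩ := tp.exists_triangle 0 (t.zero_mem (isZero_zero C))
  have hiso : IsIso h := (Triangle.isZero₂_iff_isIso₃ _ hT).1 (isZero_zero C)
  have hgeT1 : t.ge (T⟦(1 : ℤ)⟧) := t.ge_iso_closed (asIso h) (tp.free_mem_heart F hFf).2
  have hTz : IsZero T := (IsZero.iff_id_eq_zero _).2
    (t.hom_vanish (tp.torsion_mem_heart T hTt).1 hgeT1 (𝟙 T))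
  have hFz : IsZero F := (Functor.map_isZero (shiftFunctor C (1 : ℤ)) hTz).of_iso (asIso h)
  exact tp.free_iso_closed (hFz.iso hX) hFf

lemma mem_tilt {X : C} (hX : tp.torsion X) : TiltLE t tp.torsion X ∧ TiltGE t tp.free X := by
  have hh := tp.torsion_mem_heart X hX
  have hz0 : IsZero ((0 : C)⟦(1 : ℤ)⟧) :=
    Functor.map_isZero (shiftFunctor C (1 : ℤ)) (isZero_zero C)
  constructor
  · exact ⟨hh.1, 0, X, 0, 𝟙 X, 0, contractible_distinguished₁ X,
      (t.zero_mem (Functor.map_isZero (shiftFunctor C (-1 : ℤ)) (isZero_zero C))).1, hX⟩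
  · refine ⟨t.ge_shift X hh.2, 0, X, 0, 𝟙 X, 0, ?_, tp.free_of_isZero (isZero_zero C), hh.2⟩
    refine isomorphic_distinguished _ (contractible_distinguished₁ X) _ ?_
    exact Triangle.isoMk _ _ (hz0.iso (isZero_zero C)) (Iso.refl _) (Iso.refl _)
      (by exact zero_comp.trans comp_zero.symm) (by exact (id_comp _).trans (comp_id _).symm)
      (by exact zero_comp.trans comp_zero.symm)

lemma step1 {X Y Z : C} {u : X ⟶ Y} {v : Y ⟶ Z} {w : Z ⟶ X⟦(1 : ℤ)⟧}
    (hT : Triangle.mk u v w ∈ distTriang C)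
    (hXt : TiltLE t tp.torsion X ∧ TiltGE t tp.free X)
    (hgeY : t.ge Y) (hgeZ1 : t.ge (Z⟦(-1 : ℤ)⟧)) : t.heart X ∧ tp.torsion X := by
  obtain ⟨⟨hleX, A, T, f, g, h, hTA, hA, hTt⟩, ⟨hgeX1, F, B, a, b, hb, hTF, hFf, hgeB⟩⟩ := hXt
  have hleF1 : t.le ((F⟦(1 : ℤ)⟧)⟦(-1 : ℤ)⟧) :=
    t.le_iso_closed (shiftPN F).symm (tp.free_mem_heart _ hFf).1
  have hau : a ≫ u = 0 := t.vanish₁ hleF1 hgeY _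
  obtain ⟨c, hc⟩ := Triangle.coyoneda_exact₂ _ (inv_rot_of_distTriang _ hT) a hau
  have hc0 : c = 0 := t.vanish₁ hleF1 hgeZ1 c
  have ha0 : a = 0 := by rw [hc, hc0, zero_comp]; rfl
  obtain ⟨hFz, hbIso⟩ := split_lemma _ hTF ha0
    (fun s => t.vanish₁
      (t.le_iso_closed (shiftPN (F⟦(1 : ℤ)⟧)).symm (t.le_shift F (tp.free_mem_heart _ hFf).1)) hgeB s)
  haveI : IsIso b := hbIso
  have hgeX : t.ge X := t.ge_iso_closed (asIso b).symm hgeB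
  have hf0 : f = 0 := t.vanish₁ hA hgeX f
  obtain ⟨hAz, hgIso⟩ := split_lemma _ hTA hf0
    (fun s => t.vanish₂
      (t.le_iso_closed ((shiftFunctor C (-1 : ℤ)).mapIso (shiftPN A)).symm hA)
      (t.ge_shift _ (tp.torsion_mem_heart _ hTt).2) s)
  haveI : IsIso g := hgIso
  exact ⟨⟨hleX, hgeX⟩, tp.torsion_iso_closed (asIso g).symm hTt⟩

lemma step2
    (hSerre : ∀ {X Y Z : C} (f : X ⟶ Y) (g : Y ⟶ Z) (h : Z ⟶ X⟦(1 : ℤ)⟧),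
      (Triangle.mk f g h ∈ distTriang C) → t.heart X → t.heart Y → t.heart Z →
        (tp.torsion Y ↔ tp.torsion X ∧ tp.torsion Z))
    {X Y Z : C} {u : X ⟶ Y} {v : Y ⟶ Z} {w : Z ⟶ X⟦(1 : ℤ)⟧}
    (hT : Triangle.mk u v w ∈ distTriang C)
    (hZt : TiltLE t tp.torsion Z ∧ TiltGE t tp.free Z)
    (hhX : t.heart X) (hTX : tp.torsion X) (hgeY : t.ge Y) :
    t.heart Z ∧ tp.torsion Z := by
  obtain ⟨⟨hleZ, A', T', a₂, b₂, h₂, hTA, hA', hTt'⟩,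
    ⟨hgeZ1, F', B', a₃, b₃, h₃, hTF, hFf', hgeB'⟩⟩ := hZt
  have hgeT' : t.ge T' := (tp.torsion_mem_heart _ hTt').2
  have hleF1 : t.le ((F'⟦(1 : ℤ)⟧)⟦(-1 : ℤ)⟧) :=
    t.le_iso_closed (shiftPN F').symm (tp.free_mem_heart _ hFf').1
  -- mutual factorization of the two "τ^{≤-1}" pieces of `Z`
  obtain ⟨α₀, hα₀⟩ := Triangle.coyoneda_exact₂ _ hTF a₂ (t.vanish₁ hA' hgeB' _)
  obtain ⟨β₀, hβ₀⟩ := Triangle.coyoneda_exact₂ _ hTA a₃ (t.vanish₁ hleF1 hgeT' _)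
  let α : A' ⟶ F'⟦(1 : ℤ)⟧ := α₀
  let β : F'⟦(1 : ℤ)⟧ ⟶ A' := β₀
  have hα : a₂ = α ≫ a₃ := hα₀
  have hβ : a₃ = β ≫ a₂ := hβ₀
  have hαβ : α ≫ β = 𝟙 A' := by
    obtain ⟨δ, hδ⟩ := Triangle.coyoneda_exact₂ _ (inv_rot_of_distTriang _ hTA)
      (α ≫ β - 𝟙 A') (by
        have : (α ≫ β - 𝟙 A') ≫ a₂ = 0 := by
          rw [Preadditive.sub_comp, assoc, ← hβ, ← hα, id_comp, sub_self]
        exact this)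
    have hδ0 : δ = 0 :=
      t.hom_vanish (t.le_up hA') (t.ge_iso_closed (shiftNP T').symm hgeT') δ
    rw [hδ0, zero_comp] at hδ
    exact sub_eq_zero.1 hδ
  have hβα : β ≫ α = 𝟙 (F'⟦(1 : ℤ)⟧) := by
    obtain ⟨δ, hδ⟩ := Triangle.coyoneda_exact₂ _ (inv_rot_of_distTriang _ hTF)
      (β ≫ α - 𝟙 (F'⟦(1 : ℤ)⟧)) (by
        have : (β ≫ α - 𝟙 (F'⟦(1 : ℤ)⟧)) ≫ a₃ = 0 := by
          rw [Preadditive.sub_comp, assoc, ← hα, ← hβ, id_comp, sub_self]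
        exact this)
    have hδ0 : δ = 0 :=
      t.hom_vanish (t.le_up hleF1) (t.ge_iso_closed (shiftNP B').symm hgeB') δ
    rw [hδ0, zero_comp] at hδ
    exact sub_eq_zero.1 hδ
  have isoA : A' ≅ F'⟦(1 : ℤ)⟧ := ⟨α, β, hαβ, hβα⟩
  have hfreeH : tp.free (A'⟦(-1 : ℤ)⟧) := tp.free_iso_closed
    (((shiftFunctor C (-1 : ℤ)).mapIso isoA ≪≫ shiftPN F').symm) hFf'
  -- the cone `D` of the composite `A' ⟶ Z ⟶ X⟦1⟧`
  obtain ⟨D, r, s', hTD⟩ := distinguished_cocone_triangle (a₂ ≫ w)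
  have HomD : ∀ (W : C), t.le ((W⟦(-1 : ℤ)⟧)⟦(-1 : ℤ)⟧) → ∀ f : W ⟶ D, f = 0 := by
    intro W hW fW
    have h31 : s' ≫ (a₂ ≫ w)⟦(1 : ℤ)⟧' = 0 := comp_distTriang_mor_zero₃₁ _ hTD
    rw [Functor.map_comp] at h31
    have hq : ((fW ≫ s') ≫ a₂⟦(1 : ℤ)⟧') ≫ w⟦(1 : ℤ)⟧' = 0 := by
      rw [assoc, assoc, h31, comp_zero]
    obtain ⟨e, he⟩ := Triangle.coyoneda_exact₁ _
      (rot_of_distTriang _ (rot_of_distTriang _ hT)) ((fW ≫ s') ≫ a₂⟦(1 : ℤ)⟧') hq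
    have he0 : e = 0 := t.vanish₂ hW (t.ge_iso_closed (shiftPN Y).symm hgeY) e
    have hq0 : (fW ≫ s') ≫ a₂⟦(1 : ℤ)⟧' = 0 := he.trans (by rw [he0]; exact zero_comp)
    obtain ⟨t', ht'⟩ := Triangle.coyoneda_exact₁ _ hTA (fW ≫ s') hq0
    have ht'0 : t' = 0 := t.vanish₂ hW (t.ge_shift _ hgeT') t'
    have hfs : fW ≫ s' = 0 := ht'.trans (by rw [ht'0]; exact zero_comp)
    obtain ⟨f', hf'⟩ := Triangle.coyoneda_exact₃ _ hTD fW hfs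
    have hf'0 : f' = 0 := t.vanish₂ hW (t.ge_iso_closed (shiftPN X).symm hhX.2) f'
    exact hf'.trans (by rw [hf'0]; exact zero_comp)
  have hgeD : t.ge (D⟦(-1 : ℤ)⟧) := t.ge_of_hom _ (fun W' hW' f' => by
    have h0 : (shiftFunctor C (1 : ℤ)).map f' ≫ (shiftNP D).hom = 0 :=
      HomD (W'⟦(1 : ℤ)⟧)
        (t.le_iso_closed ((shiftFunctor C (-1 : ℤ)).mapIso (shiftPN W')).symm hW') _
    have h1 : (shiftFunctor C (1 : ℤ)).map f' = 0 := by
      rw [← comp_id ((shiftFunctor C (1 : ℤ)).map f'), ← (shiftNP D).hom_inv_id,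
        ← assoc, h0, zero_comp]
    exact (shiftFunctor C (1 : ℤ)).map_injective (by rw [h1, Functor.map_zero]))
  have hinv2 := inv_rot_of_distTriang _ (inv_rot_of_distTriang _ hTD)
  have hleD : t.le (D⟦(-1 : ℤ)⟧) := t.le₂ _ hinv2
    (t.le_iso_closed (shiftPN X).symm hhX.1) (t.le_up hA')
  have hinv3 := inv_rot_of_distTriang _ hinv2
  set T3 := (((Triangle.mk (a₂ ≫ w) r s').invRotate).invRotate).invRotate with hT3
  have hheart1 : t.heart (A'⟦(-1 : ℤ)⟧) := tp.free_mem_heart _ hfreeH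
  have hheart2 : t.heart (X⟦(1 : ℤ)⟧⟦(-1 : ℤ)⟧) := t.heart_iso_closed (shiftPN X).symm hhX
  have htor2 : tp.torsion (X⟦(1 : ℤ)⟧⟦(-1 : ℤ)⟧) := tp.torsion_iso_closed (shiftPN X).symm hTX
  have hser := hSerre T3.mor₁ T3.mor₂ T3.mor₃ hinv3 hheart1 hheart2 ⟨hleD, hgeD⟩
  obtain ⟨htorH, -⟩ := hser.1 htor2
  have hHz : IsZero (A'⟦(-1 : ℤ)⟧) :=
    (IsZero.iff_id_eq_zero _).2 (tp.hom_vanish htorH hfreeH (𝟙 _))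
  have hA'z : IsZero A' :=
    (Functor.map_isZero (shiftFunctor C (1 : ℤ)) hHz).of_iso (shiftNP A').symm
  haveI : IsIso b₂ := (Triangle.isZero₁_iff_isIso₂ _ hTA).1 hA'z
  exact ⟨⟨hleZ, t.ge_iso_closed (asIso b₂).symm hgeT'⟩,
    tp.torsion_iso_closed (asIso b₂).symm hTt'⟩

end HeartTorsionPair

end Helpers

/-- If the torsion class `𝒯` of a torsion pair on the heart of a t-structure is a Serre
subcategory of the heart (membership in `𝒯` of the middle term of a distinguished triangle
with all three terms in the heart is equivalent to membership of the two outer terms), then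
`𝒯` is contained in the tilted heart `𝒟_υ^♥ = 𝒟_υ^{≤0} ∩ 𝒟_υ^{≥0}` and it is a Serre
subcategory of the tilted heart. -/
theorem torsion_serre_of_tilted_heart (t : TStruct C) (tp : HeartTorsionPair t)
    (hSerre : ∀ {X Y Z : C} (f : X ⟶ Y) (g : Y ⟶ Z) (h : Z ⟶ X⟦(1 : ℤ)⟧),
      (Triangle.mk f g h ∈ distTriang C) → t.heart X → t.heart Y → t.heart Z →
        (tp.torsion Y ↔ tp.torsion X ∧ tp.torsion Z)) :
    (∀ X : C, tp.torsion X → TiltLE t tp.torsion X ∧ TiltGE t tp.free X) ∧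
    (∀ {X Y Z : C} (f : X ⟶ Y) (g : Y ⟶ Z) (h : Z ⟶ X⟦(1 : ℤ)⟧),
      (Triangle.mk f g h ∈ distTriang C) →
      (TiltLE t tp.torsion X ∧ TiltGE t tp.free X) →
      (TiltLE t tp.torsion Y ∧ TiltGE t tp.free Y) →
      (TiltLE t tp.torsion Z ∧ TiltGE t tp.free Z) →
        (tp.torsion Y ↔ tp.torsion X ∧ tp.torsion Z)) := by
  constructor
  · exact fun X hX => tp.mem_tilt hX
  · intro X Y Z u v w hT hX hY hZ
    constructor
    · intro hTY
      have hgeY := (tp.torsion_mem_heart Y hTY).2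
      obtain ⟨hhX, hTX⟩ := tp.step1 hT hX hgeY hZ.2.1
      obtain ⟨hhZ, hTZ⟩ := tp.step2 hSerre hT hZ hhX hTX hgeY
      exact ⟨hTX, hTZ⟩
    · rintro ⟨hTX, hTZ⟩
      have hhX := tp.torsion_mem_heart X hTX
      have hhZ := tp.torsion_mem_heart Z hTZ
      have hleY := t.le₂ _ hT hhX.1 hhZ.1
      have hgeY := t.ge₂ _ hT hhX.2 hhZ.2
      exact (hSerre u v w hT hhX ⟨hleY, hgeY⟩ hhZ).2 ⟨hTX, hTZ⟩
end
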